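/- Let 𝒞 = (C, Q, 𝒯) be a counter system and 𝒞_α its 01-counter system. Then (c,v̂) → (c',v̂') is a step of 𝒞_α if and only if there exists a pair ((c,v),(c',v')) ∈ 𝒯 that is minimal in 𝒯 with respect to the product order ≼₀ × ≼₀ and satisfies α(c,v) = (c,v̂) and α(c',v') = (c',v̂'). (A pair t ∈ 𝒯 is minimal if every t' ∈ 𝒯 with t' ≼₀ × ≼₀ t equals t.) -/
import Mathlib


namespace CS01

variable {C Q A : Type*}

/-- Configurations of a counter system: a controller state and a counter vector. -/
abbrev Conf (C Q : Type*) := C × (Q → ℕ)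

/-- The order `≼₀`: same controller state, pointwise smaller counters,
and the same zero pattern. -/
def Le0 (x y : Conf C Q) : Prop :=
  x.1 = y.1 ∧ (∀ q, x.2 q ≤ y.2 q) ∧ ∀ q, (x.2 q = 0 ↔ y.2 q = 0)

/-- The product order `≼₀ × ≼₀` on pairs of configurations. -/
def ProdLe0 (s t : Conf C Q × Conf C Q) : Prop :=
  Le0 s.1 t.1 ∧ Le0 s.2 t.2

/-- The abstraction `α`, mapping a configuration to its 01-abstraction. -/
def alpha (x : Conf C Q) : Conf C Q :=
  (x.1, fun q => if x.2 q = 0 then 0 else 1)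

/-- Forward `≼₀`-compatibility of a step relation. -/
def FwdCompat (T : Set (Conf C Q × Conf C Q)) : Prop :=
  ∀ x y d, (x, y) ∈ T → Le0 x d → ∃ d', (d, d') ∈ T ∧ Le0 y d'

/-- Backward `≼₀`-compatibility of a step relation. -/
def BwdCompat (T : Set (Conf C Q × Conf C Q)) : Prop :=
  ∀ x y d', (x, y) ∈ T → Le0 y d' → ∃ d, (d, d') ∈ T ∧ Le0 x d

/-- Steps of a counter system are size-preserving. -/
def SizePreserving [Fintype Q] (T : Set (Conf C Q × Conf C Q)) : Prop :=
  ∀ t ∈ T, ∑ q, t.1.2 q = ∑ q, t.2.2 q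

/-- A step of the 01-counter system `𝒞_α`. -/
def AbsStep (T : Set (Conf C Q × Conf C Q)) (x' y' : Conf C Q) : Prop :=
  ∃ t ∈ T, alpha t.1 = x' ∧ alpha t.2 = y'

/-- A finite run of the counter system, starting in an initial configuration. -/
def IsRun (T : Set (Conf C Q × Conf C Q)) (c0 : C) (Q0 : Set Q)
    {n : ℕ} (ρ : Fin (n + 1) → Conf C Q) : Prop :=
  (ρ 0).1 = c0 ∧ (∀ q ∉ Q0, (ρ 0).2 q = 0) ∧
    ∀ i : Fin n, (ρ i.castSucc, ρ i.succ) ∈ T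

/-- A finite run of the 01-counter system, starting in an initial (0/1-valued)
abstract configuration. -/
def IsAbsRun (T : Set (Conf C Q × Conf C Q)) (c0 : C) (Q0 : Set Q)
    {n : ℕ} (σ : Fin (n + 1) → Conf C Q) : Prop :=
  (σ 0).1 = c0 ∧ (∀ q, (σ 0).2 q ≤ 1) ∧ (∀ q ∉ Q0, (σ 0).2 q = 0) ∧
    ∀ i : Fin n, AbsStep T (σ i.castSucc) (σ i.succ)

/-- Reachability in the counter system. -/
def Reach (T : Set (Conf C Q × Conf C Q)) (c0 : C) (Q0 : Set Q)
    (x : Conf C Q) : Prop :=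
  ∃ (n : ℕ) (ρ : Fin (n + 1) → Conf C Q), IsRun T c0 Q0 ρ ∧ ρ (Fin.last n) = x

/-- Reachability in the 01-counter system. -/
def AbsReach (T : Set (Conf C Q × Conf C Q)) (c0 : C) (Q0 : Set Q)
    (x : Conf C Q) : Prop :=
  ∃ (n : ℕ) (σ : Fin (n + 1) → Conf C Q), IsAbsRun T c0 Q0 σ ∧ σ (Fin.last n) = x

/-- The counter vector obtained when `i` processes move from `p` to `p'`. -/
def moveN [DecidableEq Q] (v : Q → ℕ) (p p' : Q) (i : ℕ) : Q → ℕ :=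
  fun q => v q - (if q = p then i else 0) + (if q = p' then i else 0)


lemma le0_alpha {x y : Conf C Q} (h : Le0 x y) : alpha x = alpha y := by
  obtain ⟨h1, _, h3⟩ := h
  unfold alpha
  refine Prod.ext h1 (funext fun q => ?_)
  by_cases hz : x.2 q = 0
  · simp [hz, (h3 q).mp hz]
  · have hz' : y.2 q ≠ 0 := fun h' => hz ((h3 q).mpr h')
    simp [hz, hz']

lemma prodLe0_trans {a b c : Conf C Q × Conf C Q}
    (h1 : ProdLe0 a b) (h2 : ProdLe0 b c) : ProdLe0 a c := by
  obtain ⟨⟨e1, l1, z1⟩, ⟨e2, l2, z2⟩⟩ := h1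
  obtain ⟨⟨e1', l1', z1'⟩, ⟨e2', l2', z2'⟩⟩ := h2
  exact ⟨⟨e1.trans e1', fun q => (l1 q).trans (l1' q), fun q => (z1 q).trans (z1' q)⟩,
    ⟨e2.trans e2', fun q => (l2 q).trans (l2' q), fun q => (z2 q).trans (z2' q)⟩⟩

/-- total counter measure -/
def meas [Fintype Q] (t : Conf C Q × Conf C Q) : ℕ :=
  ∑ q, (t.1.2 q + t.2.2 q)

lemma meas_lt [Fintype Q] {s t : Conf C Q × Conf C Q}
    (h : ProdLe0 s t) (hne : s ≠ t) : meas s < meas t := by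
  obtain ⟨⟨e1, l1, z1⟩, ⟨e2, l2, z2⟩⟩ := h
  have hle : ∀ q ∈ Finset.univ, s.1.2 q + s.2.2 q ≤ t.1.2 q + t.2.2 q :=
    fun q _ => Nat.add_le_add (l1 q) (l2 q)
  refine lt_of_le_of_ne (Finset.sum_le_sum hle) (fun heq => hne ?_)
  have := (Finset.sum_eq_sum_iff_of_le hle).mp heq
  have h1 : s.1.2 = t.1.2 := funext fun q =>
    le_antisymm (l1 q) (by have := this q (Finset.mem_univ q); have := l2 q; omega)
  have h2 : s.2.2 = t.2.2 := funext fun q =>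
    le_antisymm (l2 q) (by have := this q (Finset.mem_univ q); have := l1 q; omega)
  exact Prod.ext (Prod.ext e1 h1) (Prod.ext e2 h2)

lemma exists_min [Fintype Q] (T : Set (Conf C Q × Conf C Q)) :
    ∀ (n : ℕ) (t : Conf C Q × Conf C Q), t ∈ T → meas t ≤ n →
      ∃ s ∈ T, ProdLe0 s t ∧ ∀ t' ∈ T, ProdLe0 t' s → t' = s := by
  intro n
  induction n with
  | zero =>
    intro t ht hm
    refine ⟨t, ht, ⟨⟨rfl, fun q => le_refl _, fun q => Iff.rfl⟩,
      ⟨rfl, fun q => le_refl _, fun q => Iff.rfl⟩⟩, fun t' ht' hle => ?_⟩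
    by_contra hne
    have := meas_lt hle hne
    omega
  | succ n ih =>
    intro t ht hm
    by_cases hmin : ∀ t' ∈ T, ProdLe0 t' t → t' = t
    · exact ⟨t, ht, ⟨⟨rfl, fun q => le_refl _, fun q => Iff.rfl⟩,
        ⟨rfl, fun q => le_refl _, fun q => Iff.rfl⟩⟩, hmin⟩
    · push_neg at hmin
      obtain ⟨t', ht', hle, hne⟩ := hmin
      have hlt := meas_lt hle hne
      obtain ⟨s, hs, hle', hmin'⟩ := ih t' ht' (by omega)
      exact ⟨s, hs, prodLe0_trans hle' hle, hmin'⟩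

/-- `(c, v̂) → (c', v̂')` is a step of the 01-counter system `𝒞_α`
iff some pair of `𝒯` that is minimal with respect to `≼₀ × ≼₀` abstracts to
`((c, v̂), (c', v̂'))` under `α`. -/
theorem stmt12 [Fintype C] [Fintype Q] [Nonempty C] [Nonempty Q]
    (T : Set (Conf C Q × Conf C Q)) (hsize : SizePreserving T)
    (xh yh : Conf C Q) :
    AbsStep T xh yh ↔
      ∃ t ∈ T, (∀ t' ∈ T, ProdLe0 t' t → t' = t) ∧
        alpha t.1 = xh ∧ alpha t.2 = yh := by
  constructor
  · rintro ⟨t, ht, hx, hy⟩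
    obtain ⟨s, hs, hle, hmin⟩ := exists_min T (meas t) t ht le_rfl
    exact ⟨s, hs, hmin, (le0_alpha hle.1).trans hx, (le0_alpha hle.2).trans hy⟩
  · rintro ⟨t, ht, _, hx, hy⟩
    exact ⟨t, ht, hx, hy⟩

end CS01
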